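/- Let (X_i^n) be i.i.d. with law ν on ℕ and (B_i^n) i.i.d. Bernoulli(p) independent of the X's. Define Y_0 = Y_0^p = N, Y_{n+1} = Σ_{i≤Y_n} X_i^n, and Y_{n+1}^p = Σ_{i≤Y_n^p} B_i^n X_i^n. Then for any T, M, N: P(Y_T^p ≥ 2N) ≥ P(max_{0≤i≤T} Y_i ≤ M and Y_T ≥ 2N) · p^{T·M}. -/

import Mathlib

open MeasureTheory ProbabilityTheory Filter ENNReal NNReal
noncomputable section

/-- Thinning inequality: if (Yᵖ) is the p-thinned Galton–Watson process, then
P(Yᵖ_T ≥ 2N) ≥ P(max_{i≤T} Y_i ≤ M and Y_T ≥ 2N)·p^{T·M}. -/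
theorem stmt18 {Ω : Type} [MeasurableSpace Ω] (P : Measure Ω) [IsProbabilityMeasure P]
    (ν : Measure ℕ) [IsProbabilityMeasure ν] (p : ℝ≥0) (hp : p ≤ 1)
    (X B : ℕ → ℕ → Ω → ℕ)
    (hXmeas : ∀ n i, Measurable (X n i)) (hBmeas : ∀ n i, Measurable (B n i))
    (hindep : iIndepFun
      (fun q : Bool × ℕ × ℕ => if q.1 then B q.2.1 q.2.2 else X q.2.1 q.2.2) P)
    (hXlaw : ∀ n i, Measure.map (X n i) P = ν)
    (hB01 : ∀ n i ω, B n i ω ≤ 1)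
    (hBlaw : ∀ n i, P {ω | B n i ω = 1} = (p : ℝ≥0∞))
    (N : ℕ) (Y Yp : ℕ → Ω → ℕ)
    (hY0 : ∀ ω, Y 0 ω = N) (hYp0 : ∀ ω, Yp 0 ω = N)
    (hY : ∀ n ω, Y (n + 1) ω = ∑ i ∈ Finset.range (Y n ω), X n i ω)
    (hYp : ∀ n ω, Yp (n + 1) ω = ∑ i ∈ Finset.range (Yp n ω), B n i ω * X n i ω)
    (T M : ℕ) :
    P {ω | (∀ i ≤ T, Y i ω ≤ M) ∧ 2 * N ≤ Y T ω} * (p : ℝ≥0∞) ^ (T * M)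
      ≤ P {ω | 2 * N ≤ Yp T ω} := by
  classical
  set f : Bool × ℕ × ℕ → Ω → ℕ :=
    fun q => if q.1 then B q.2.1 q.2.2 else X q.2.1 q.2.2 with hf
  set m : Bool × ℕ × ℕ → MeasurableSpace Ω :=
    fun q => MeasurableSpace.comap (f q) inferInstance with hm
  have hfX : ∀ n i, f (false, n, i) = X n i := fun n i => rfl
  have hfB : ∀ n i, f (true, n, i) = B n i := fun n i => rfl
  have hiI : iIndep m P := hindep.iIndep
  have h_le : ∀ q, m q ≤ ‹MeasurableSpace Ω› := by
    intro q
    rcases q with ⟨b, n, i⟩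
    cases b
    · exact (hXmeas n i).comap_le
    · exact (hBmeas n i).comap_le
  -- the two σ-algebras
  set Sx : Set (Bool × ℕ × ℕ) := {q | q.1 = false} with hSx
  set Sb : Set (Bool × ℕ × ℕ) := {q | q.1 = true} with hSb
  have hdisj : Disjoint Sx Sb := by
    rw [Set.disjoint_iff]
    rintro ⟨b, n, i⟩ ⟨h1, h2⟩
    simp only [hSx, hSb, Set.mem_setOf_eq] at h1 h2
    rw [h1] at h2; exact absurd h2 (by simp)
  set mX : MeasurableSpace Ω := ⨆ q ∈ Sx, m q with hmX
  set mB : MeasurableSpace Ω := ⨆ q ∈ Sb, m q with hmB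
  have hIndep2 : Indep mX mB P := indep_iSup_of_disjoint h_le hiI hdisj
  -- X's are mX-measurable
  have hXm : ∀ n i, Measurable[mX] (X n i) := by
    intro n i
    rw [measurable_iff_comap_le]
    have : m (false, n, i) ≤ mX := by
      refine le_trans ?_ (le_iSup _ (false, n, i))
      simp [hSx]
    exact this
  -- Y's are mX-measurable
  have hYm : ∀ n, Measurable[mX] (Y n) := by
    intro n
    induction n with
    | zero =>
      have : Y 0 = fun _ => N := funext hY0
      rw [this]; exact measurable_const
    | succ n ih =>
      have hkey : Y (n + 1) = fun ω => ∑ i ∈ Finset.range (Y n ω), X n i ω :=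
        funext (hY n)
      rw [hkey]
      apply @measurable_to_countable' ℕ Ω _ _ mX
      intro k
      have hset : (fun ω => ∑ i ∈ Finset.range (Y n ω), X n i ω) ⁻¹' {k}
          = ⋃ j, (Y n ⁻¹' {j}) ∩ ((fun ω => ∑ i ∈ Finset.range j, X n i ω) ⁻¹' {k}) := by
        ext ω
        simp only [Set.mem_preimage, Set.mem_singleton_iff, Set.mem_iUnion, Set.mem_inter_iff]
        constructor
        · intro h; exact ⟨Y n ω, rfl, h⟩
        · rintro ⟨j, hj, hk⟩; rw [hj]; exact hk
      rw [hset]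
      refine MeasurableSet.iUnion fun j => MeasurableSet.inter ?_ ?_
      · exact ih (measurableSet_singleton j)
      · have : Measurable[mX] (fun ω => ∑ i ∈ Finset.range j, X n i ω) :=
          Finset.measurable_sum _ fun i _ => hXm n i
        exact this (measurableSet_singleton k)
  -- the good event for the X-side
  set A : Set Ω := {ω | (∀ i ≤ T, Y i ω ≤ M) ∧ 2 * N ≤ Y T ω} with hA
  have hAmeas : MeasurableSet[mX] A := by
    have : A = (⋂ i ∈ Set.Iic T, Y i ⁻¹' Set.Iic M) ∩ (Y T ⁻¹' Set.Ici (2 * N)) := by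
      ext ω
      simp [hA, Set.mem_iInter, Set.mem_preimage]
    rw [this]
    refine MeasurableSet.inter ?_ (hYm T measurableSet_Ici)
    exact MeasurableSet.biInter (Set.to_countable _)
      fun i _ => hYm i measurableSet_Iic
  -- the Bernoulli event
  set s : Finset (Bool × ℕ × ℕ) :=
    (Finset.range T ×ˢ Finset.range M).image (fun r : ℕ × ℕ => ((true : Bool), r)) with hs
  set g : Bool × ℕ × ℕ → Set Ω := fun q => {ω | B q.2.1 q.2.2 ω = 1} with hg
  set E : Set Ω := ⋂ q ∈ s, g q with hE
  have hgmeas : ∀ q ∈ s, MeasurableSet[m q] (g q) := by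
    rintro ⟨b, n, i⟩ hq
    simp only [hs, Finset.mem_image, Finset.mem_product, Finset.mem_range] at hq
    obtain ⟨⟨n', i'⟩, _, heq⟩ := hq
    obtain ⟨hb, hn, hi⟩ : b = true ∧ n' = n ∧ i' = i := by
      simpa [Prod.ext_iff] using heq
    subst hb hn hi
    refine ⟨{1}, measurableSet_singleton 1, ?_⟩
    rfl
  have hEmeas : MeasurableSet[mB] E := by
    refine Finset.measurableSet_biInter s fun q hq => ?_
    have hq1 : q.1 = true := by
      simp only [hs, Finset.mem_image] at hq
      obtain ⟨r, _, heq⟩ := hq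
      rw [← heq]
    have hle : m q ≤ mB := le_trans ?_ (le_iSup _ q)
    · exact hle _ (hgmeas q hq)
    · simp [hSb, hq1]
  -- probability of E
  have hPE : P E = (p : ℝ≥0∞) ^ (T * M) := by
    have := hiI.meas_biInter (S := s) (s := g) hgmeas
    rw [hE, this, hs, Finset.prod_image]
    · have : ∀ r ∈ Finset.range T ×ˢ Finset.range M,
          P (g ((true : Bool), r)) = (p : ℝ≥0∞) := by
        rintro ⟨n, i⟩ _
        exact hBlaw n i
      rw [Finset.prod_congr rfl this, Finset.prod_const]
      simp [Finset.card_product]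
    · intro a _ b _ hab
      simpa [Prod.ext_iff] using hab
  -- independence: P (A ∩ E) = P A * P E
  have hmul : P (A ∩ E) = P A * P E := by
    have := (Indep_iff mX mB P).1 hIndep2 A E hAmeas hEmeas
    exact this
  -- inclusion A ∩ E ⊆ {2N ≤ Yp T}
  have hincl : A ∩ E ⊆ {ω | 2 * N ≤ Yp T ω} := by
    rintro ω ⟨⟨hbound, hYT⟩, hEω⟩
    have hB1 : ∀ n < T, ∀ i < M, B n i ω = 1 := by
      intro n hn i hi
      have hq : ((true : Bool), n, i) ∈ s := by
        simp only [hs, Finset.mem_image]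
        exact ⟨(n, i), by simp [Finset.mem_product, hn, hi], rfl⟩
      have := Set.mem_iInter₂.1 hEω _ hq
      exact this
    have heq : ∀ n ≤ T, Yp n ω = Y n ω := by
      intro n hn
      induction n with
      | zero => rw [hYp0, hY0]
      | succ n ih =>
        have hn' : n ≤ T := Nat.le_of_succ_le hn
        have hnT : n < T := hn
        rw [hYp n ω, hY n ω, ih hn']
        refine Finset.sum_congr rfl fun i hi => ?_
        have hiM : i < M := lt_of_lt_of_le (Finset.mem_range.1 hi) (hbound n hn')
        rw [hB1 n hnT i hiM, one_mul]
    have : 2 * N ≤ Yp T ω := by rw [heq T le_rfl]; exact hYT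
    exact this
  calc P A * (p : ℝ≥0∞) ^ (T * M) = P (A ∩ E) := by rw [hmul, hPE]
    _ ≤ P {ω | 2 * N ≤ Yp T ω} := measure_mono hincl
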